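/- Let A be an n×n matrix over a division ring F and b ∈ Fⁿ. The linear system A x = b has a unique solution (up to commutators) if and only if the Dieudonné determinant of A is nonzero, and in that case the class of the j-th component of the solution equals Det(A)⁻¹ · Det(A with j-th column replaced by b) in the abelianization of F×. -/

import Mathlib

open scoped Classical

set_option maxHeartbeats 1000000

/-- The class of `x ∈ F` in the abelianization of `Fˣ`, with `0` adjoined. -/
noncomputable def cls {F : Type} [DivisionRing F] (x : F) : WithZero (Abelianization Fˣ) :=
  if h : x = 0 then 0 else (Abelianization.of (Units.mk0 x h) : Abelianization Fˣ)

namespace DieudonneAux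

open Matrix

variable {F : Type} [DivisionRing F] {n : ℕ}

lemma cls_zero : cls (0 : F) = 0 := dif_pos rfl

lemma cls_ne_zero {x : F} (h : x ≠ 0) : cls x ≠ 0 := by
  rw [cls, dif_neg h]; exact WithZero.coe_ne_zero

lemma cls_mul (a b : F) : cls (a * b) = cls a * cls b := by
  rcases eq_or_ne a 0 with rfl | ha
  · rw [zero_mul, cls_zero, zero_mul]
  rcases eq_or_ne b 0 with rfl | hb
  · rw [mul_zero, cls_zero, mul_zero]
  rw [cls, cls, cls, dif_neg ha, dif_neg hb, dif_neg (mul_ne_zero ha hb), ← WithZero.coe_mul]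
  congr 1
  rw [← _root_.map_mul]
  congr 1
  ext
  simp

lemma cls_one : cls (1 : F) = 1 := by
  rw [cls, dif_neg (one_ne_zero : (1:F) ≠ 0), Units.mk0_one, _root_.map_one, WithZero.coe_one]

/-- `cls` as a monoid hom. -/
noncomputable def clsHom (F : Type) [DivisionRing F] : F →* WithZero (Abelianization Fˣ) where
  toFun := cls
  map_one' := cls_one
  map_mul' := cls_mul

lemma cls_list_prod (f : Fin n → F) : cls ((List.ofFn f).prod) = ∏ i, cls (f i) := by
  have h : cls ((List.ofFn f).prod) = ((List.ofFn f).map (clsHom F)).prod :=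
    map_list_prod (clsHom F) _
  rw [h, List.map_ofFn, List.prod_ofFn]
  rfl

lemma mulVec_def (M : Matrix (Fin n) (Fin n) F) (v : Fin n → F) (i : Fin n) :
    M.mulVec v i = ∑ j, M i j * v j := rfl

/-- Row equivalence via row-addition operations. -/
inductive RowEquiv : Matrix (Fin n) (Fin n) F → Matrix (Fin n) (Fin n) F → Prop
  | refl (M) : RowEquiv M M
  | step {M N} (h : RowEquiv M N) (i j : Fin n) (hij : i ≠ j) (l : F) :
      RowEquiv M (N.updateRow i (N i + l • N j))

lemma RowEquiv.trans {M N P : Matrix (Fin n) (Fin n) F} (h1 : RowEquiv M N)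
    (h2 : RowEquiv N P) : RowEquiv M P := by
  induction h2 with
  | refl => exact h1
  | step h i j hij l ih => exact ih.step i j hij l

lemma RowEquiv.det_eq (Det : Matrix (Fin n) (Fin n) F → WithZero (Abelianization Fˣ))
    (hrowadd : ∀ (A : Matrix (Fin n) (Fin n) F) (i j : Fin n), i ≠ j → ∀ l : F,
      Det (A.updateRow i (A i + l • A j)) = Det A)
    {M N : Matrix (Fin n) (Fin n) F} (h : RowEquiv M N) : Det N = Det M := by
  induction h with
  | refl => rfl
  | step h i j hij l ih => rw [hrowadd _ i j hij l, ih]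

lemma updateRow_mul (M : Matrix (Fin n) (Fin n) F) (i : Fin n) (r : Fin n → F)
    (C : Matrix (Fin n) (Fin n) F) :
    (M.updateRow i r) * C = (M * C).updateRow i (fun b => ∑ k, r k * C k b) := by
  ext a b
  by_cases ha : a = i
  · subst ha
    simp [mul_apply, Matrix.updateRow_self]
  · simp [mul_apply, Matrix.updateRow_ne ha]

lemma RowEquiv.mul_right {M N : Matrix (Fin n) (Fin n) F} (C : Matrix (Fin n) (Fin n) F)
    (h : RowEquiv M N) : RowEquiv (M * C) (N * C) := by
  induction h with
  | refl => exact .refl _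
  | @step N' h i j hij l ih =>
      have harg : (fun b => ∑ k, (N' i + l • N' j) k * C k b)
          = ((N' * C) i + l • (N' * C) j) := by
        funext b
        simp only [Pi.add_apply, Pi.smul_apply, smul_eq_mul, add_mul, mul_apply,
          Finset.sum_add_distrib, Finset.mul_sum, mul_assoc]
      have key : (N'.updateRow i (N' i + l • N' j)) * C
          = (N' * C).updateRow i ((N' * C) i + l • (N' * C) j) := by
        rw [updateRow_mul, harg]
      rw [key]
      exact ih.step i j hij l

lemma transvection_mul (i j : Fin n) (l : F) (N : Matrix (Fin n) (Fin n) F) :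
    (1 + Matrix.single i j l) * N = N.updateRow i (N i + l • N j) := by
  ext a b
  rw [add_mul, one_mul]
  by_cases ha : a = i
  · subst ha
    rw [Matrix.updateRow_self]
    simp
  · rw [Matrix.updateRow_ne ha]
    simp [ha]

lemma isUnit_transvection {i j : Fin n} (hij : i ≠ j) (l : F) :
    IsUnit (1 + Matrix.single i j l : Matrix (Fin n) (Fin n) F) := by
  have key : ∀ a b : F, (1 + Matrix.single i j a) * (1 + Matrix.single i j b)
      = 1 + Matrix.single i j (a + b) := by
    intro a b
    have h0 : Matrix.single i j a * Matrix.single i j b = 0 :=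
      Matrix.single_mul_single_of_ne (c := a) i j i (Ne.symm hij) b
    rw [add_mul, one_mul, mul_add, mul_one, h0, add_zero, Matrix.single_add]
    abel
  refine ⟨⟨1 + Matrix.single i j l, 1 + Matrix.single i j (-l), ?_, ?_⟩, rfl⟩
  · rw [key, add_neg_cancel, Matrix.single_zero, add_zero]
  · rw [key, neg_add_cancel, Matrix.single_zero, add_zero]

lemma RowEquiv.isUnit {M N : Matrix (Fin n) (Fin n) F} (h : RowEquiv M N) (hM : IsUnit M) :
    IsUnit N := by
  induction h with
  | refl => exact hM
  | step h i j hij l ih =>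
      rw [← transvection_mul]
      exact (isUnit_transvection hij l).mul ih

lemma mulVec_injective {M : Matrix (Fin n) (Fin n) F} (hM : IsUnit M) :
    Function.Injective M.mulVec := by
  obtain ⟨u, rfl⟩ := hM
  intro x y hxy
  have h2 := congrArg (fun v => (Units.val u⁻¹).mulVec v) hxy
  simpa [Matrix.mulVec_mulVec, Units.inv_mul] using h2

lemma exists_right_inverse {M : Matrix (Fin n) (Fin n) F}
    (h : Function.Surjective M.mulVec) : ∃ B, M * B = 1 := by
  choose g hg using h
  refine ⟨fun k j => g (Pi.single j 1) k, ?_⟩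
  ext i j
  have h2 := congrFun (hg (Pi.single j 1)) i
  rw [mulVec_def] at h2
  change ∑ k, M i k * g (Pi.single j 1) k = (1 : Matrix (Fin n) (Fin n) F) i j
  simpa [Matrix.one_apply, Pi.single_apply] using h2

lemma mulVec_surjective_of_injective {M : Matrix (Fin n) (Fin n) F}
    (h : Function.Injective M.mulVec) : Function.Surjective M.mulVec := by
  haveI : Module.Finite Fᵐᵒᵖ F := by
    refine ⟨⟨{1}, ?_⟩⟩
    rw [eq_top_iff]
    rintro x -
    have hx : x = (MulOpposite.op x) • (1 : F) := by
      simp [MulOpposite.smul_eq_mul_unop]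
    rw [hx]
    exact Submodule.smul_mem _ _ (Submodule.subset_span (by simp))
  let L : (Fin n → F) →ₗ[Fᵐᵒᵖ] (Fin n → F) :=
    { toFun := M.mulVec
      map_add' := fun x y => Matrix.mulVec_add M x y
      map_smul' := fun a x => by
        funext i
        simp only [mulVec_def, RingHom.id_apply, Pi.smul_apply, MulOpposite.smul_eq_mul_unop]
        rw [Finset.sum_mul]
        exact Finset.sum_congr rfl fun j _ => (mul_assoc _ _ _).symm }
  exact LinearMap.injective_iff_surjective (f := L) |>.mp h

lemma isUnit_of_mulVec_injective {M : Matrix (Fin n) (Fin n) F}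
    (h : Function.Injective M.mulVec) : IsUnit M := by
  obtain ⟨B, hB⟩ := exists_right_inverse (mulVec_surjective_of_injective h)
  have hBinj : Function.Injective B.mulVec := by
    intro x y hxy
    have h2 := congrArg M.mulVec hxy
    rwa [Matrix.mulVec_mulVec, Matrix.mulVec_mulVec, hB, Matrix.one_mulVec,
      Matrix.one_mulVec] at h2
  obtain ⟨C, hC⟩ := exists_right_inverse (mulVec_surjective_of_injective hBinj)
  have hCA : C = M := by
    calc C = 1 * C := (one_mul C).symm
    _ = M * B * C := by rw [hB]
    _ = M * (B * C) := mul_assoc _ _ _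
    _ = M := by rw [hC, mul_one]
  rw [hCA] at hC
  exact ⟨⟨M, B, hB, hC⟩, rfl⟩

lemma clearCol (M : Matrix (Fin n) (Fin n) F) (k : Fin n) (hp : M k k ≠ 0) :
    ∀ s : Finset (Fin n), k ∉ s →
      RowEquiv M (fun i l => if i ∈ s then M i l - M i k * (M k k)⁻¹ * M k l else M i l) := by
  intro s
  induction s using Finset.induction_on with
  | empty => intro _; simpa using RowEquiv.refl M
  | @insert a s ha ih =>
    intro hk
    have hks : k ∉ s := fun h => hk (Finset.mem_insert_of_mem h)
    have hka : a ≠ k := fun h => hk (h ▸ Finset.mem_insert_self a s)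
    set N : Matrix (Fin n) (Fin n) F :=
      fun i l => if i ∈ s then M i l - M i k * (M k k)⁻¹ * M k l else M i l with hN
    have h1 := (ih hks).step a k hka (-(M a k * (M k k)⁻¹))
    have hNa : N a = M a := by funext l; simp [hN, ha]
    have hNk : N k = M k := by funext l; simp [hN, hks]
    have key : N.updateRow a (N a + (-(M a k * (M k k)⁻¹)) • N k)
        = fun i l => if i ∈ insert a s then M i l - M i k * (M k k)⁻¹ * M k l else M i l := by
      funext i l
      by_cases hia : i = a
      · subst hia
        rw [Matrix.updateRow_self]
        rw [Pi.add_apply, Pi.smul_apply, hNa, hNk, smul_eq_mul, neg_mul, ← sub_eq_add_neg,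
          if_pos (Finset.mem_insert_self i s)]
      · rw [Matrix.updateRow_ne hia]
        simp only [hN, Finset.mem_insert, hia, false_or]
    rw [key] at h1
    exact h1

lemma exists_pivot {M : Matrix (Fin n) (Fin n) F} (hM : IsUnit M) (k : ℕ) (kf : Fin n)
    (hkf : (kf : ℕ) = k)
    (hzero : ∀ j i : Fin n, (j : ℕ) < k → i ≠ j → M i j = 0)
    (hdz : ∀ j : Fin n, (j : ℕ) < k → M j j ≠ 0) :
    ∃ i : Fin n, ¬ ((i : ℕ) < k) ∧ M i kf ≠ 0 := by
  by_contra hcon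
  have hcon' : ∀ i : Fin n, ¬ ((i : ℕ) < k) → M i kf = 0 := by
    intro i hik
    by_contra hne
    exact hcon ⟨i, hik, hne⟩
  set c : Fin n → F :=
    fun j => if (j : ℕ) < k then -((M j j)⁻¹ * M j kf) else if j = kf then 1 else 0 with hc
  have hMc : M.mulVec c = 0 := by
    funext i
    rw [mulVec_def]
    by_cases hi : (i : ℕ) < k
    · have hik : i ≠ kf := fun h => by rw [h, hkf] at hi; exact lt_irrefl _ hi
      have hterm : ∀ j : Fin n, M i j * c j =
          (if j = i then -(M i kf) else 0) + (if j = kf then M i kf else 0) := by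
        intro j
        by_cases hj : (j : ℕ) < k
        · have hjk : j ≠ kf := fun h => by rw [h, hkf] at hj; exact lt_irrefl _ hj
          rw [hc]
          simp only [if_pos hj, if_neg hjk, add_zero]
          by_cases hji : j = i
          · subst hji
            rw [if_pos rfl, mul_neg, ← mul_assoc, mul_inv_cancel₀ (hdz j hj), one_mul]
          · rw [if_neg hji, hzero j i hj (fun h => hji h.symm), zero_mul]
        · rw [hc]
          simp only [if_neg hj]
          have hji : j ≠ i := fun h => hj (h ▸ hi)
          rw [if_neg hji, zero_add]
          by_cases hjk : j = kf
          · subst hjk; rw [if_pos rfl, if_pos rfl, mul_one]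
          · rw [if_neg hjk, if_neg hjk, mul_zero]
      rw [Finset.sum_congr rfl fun j _ => hterm j, Finset.sum_add_distrib,
        Finset.sum_ite_eq' Finset.univ i (fun _ => -(M i kf)),
        Finset.sum_ite_eq' Finset.univ kf (fun _ => M i kf)]
      simp
    · apply Finset.sum_eq_zero
      intro j _
      by_cases hj : (j : ℕ) < k
      · rw [hzero j i hj (fun h => hi (h ▸ hj)), zero_mul]
      · rw [hc]; simp only [if_neg hj]
        by_cases hjk : j = kf
        · subst hjk
          rw [if_pos rfl, mul_one]
          exact hcon' i hi
        · rw [if_neg hjk, mul_zero]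
  have hc0 : c = 0 := by
    apply mulVec_injective hM
    rw [hMc, Matrix.mulVec_zero]
  have hckf : c kf = 1 := by
    have hnk : ¬ ((kf : ℕ) < k) := by rw [hkf]; exact lt_irrefl k
    rw [hc]; simp [hnk]
  rw [hc0] at hckf
  exact one_ne_zero (α := F) (by simpa using hckf.symm)

lemma reduce_aux : ∀ (m k : ℕ) (M : Matrix (Fin n) (Fin n) F), IsUnit M → n ≤ k + m →
    (∀ j i : Fin n, (j : ℕ) < k → i ≠ j → M i j = 0) →
    (∀ j : Fin n, (j : ℕ) < k → M j j ≠ 0) →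
    ∃ d : Fin n → F, RowEquiv M (Matrix.diagonal d) := by
  intro m
  induction m with
  | zero =>
    intro k M _ hnk hzero _
    refine ⟨fun i => M i i, ?_⟩
    have hMd : M = Matrix.diagonal fun i => M i i := by
      ext i j
      by_cases hij : i = j
      · subst hij; rw [Matrix.diagonal_apply_eq]
      · rw [Matrix.diagonal_apply_ne _ hij,
          hzero j i (lt_of_lt_of_le j.isLt (by omega)) hij]
    exact hMd ▸ RowEquiv.refl M
  | succ m ih =>
    intro k M hM hnk hzero hdz
    by_cases hnk' : n ≤ k + m
    · exact ih k M hM hnk' hzero hdz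
    have hkn : k < n := by omega
    set kf : Fin n := ⟨k, hkn⟩ with hkfdef
    have hkfval : (kf : ℕ) = k := rfl
    obtain ⟨i0, hi0k, hi0⟩ := exists_pivot hM k kf rfl hzero hdz
    obtain ⟨M1, hre1, hu1, hz1, hdz1, hp1⟩ :
        ∃ M1 : Matrix (Fin n) (Fin n) F, RowEquiv M M1 ∧ IsUnit M1 ∧
          (∀ j i : Fin n, (j : ℕ) < k → i ≠ j → M1 i j = 0) ∧
          (∀ j : Fin n, (j : ℕ) < k → M1 j j ≠ 0) ∧ M1 kf kf ≠ 0 := by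
      by_cases hkk : M kf kf ≠ 0
      · exact ⟨M, .refl M, hM, hzero, hdz, hkk⟩
      push_neg at hkk
      have hi0kf : i0 ≠ kf := fun h => hi0 (by rw [h]; exact hkk)
      have hre : RowEquiv M (M.updateRow kf (M kf + (1:F) • M i0)) :=
        (RowEquiv.refl M).step kf i0 (Ne.symm hi0kf) 1
      refine ⟨_, hre, hre.isUnit hM, ?_, ?_, ?_⟩
      · intro j i hj hij
        by_cases hikf : i = kf
        · subst hikf
          rw [Matrix.updateRow_self]
          have hkfj : kf ≠ j := fun h => by
            rw [← h, hkfval] at hj; exact lt_irrefl _ hj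
          have hi0j : i0 ≠ j := fun h => hi0k (by rw [h]; exact hj)
          simp [hzero j _ hj hkfj, hzero j i0 hj hi0j]
        · rw [Matrix.updateRow_ne hikf]; exact hzero j i hj hij
      · intro j hj
        have hjkf : j ≠ kf := fun h => by
          rw [h, hkfval] at hj; exact lt_irrefl _ hj
        rw [Matrix.updateRow_ne hjkf]; exact hdz j hj
      · rw [Matrix.updateRow_self]
        simp only [Pi.add_apply, Pi.smul_apply, smul_eq_mul, one_mul, hkk, zero_add]
        exact hi0
    have hclear := clearCol M1 kf hp1 (Finset.univ.erase kf) (Finset.notMem_erase kf _)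
    set M2 : Matrix (Fin n) (Fin n) F :=
      fun i l => if i ∈ Finset.univ.erase kf then M1 i l - M1 i kf * (M1 kf kf)⁻¹ * M1 kf l
        else M1 i l with hM2
    have hM2ne : ∀ (i l : Fin n), i ≠ kf →
        M2 i l = M1 i l - M1 i kf * (M1 kf kf)⁻¹ * M1 kf l := by
      intro i l h
      rw [hM2]
      simp [Finset.mem_erase, h]
    have hM2kf : ∀ l : Fin n, M2 kf l = M1 kf l := by
      intro l
      rw [hM2]
      simp [Finset.mem_erase]
    have hre2 : RowEquiv M M2 := hre1.trans hclear
    have hu2 : IsUnit M2 := hclear.isUnit hu1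
    have hz2 : ∀ j i : Fin n, (j : ℕ) < k + 1 → i ≠ j → M2 i j = 0 := by
      intro j i hj hij
      by_cases hjk : (j : ℕ) < k
      · have hkfj : kf ≠ j := fun h => by
          rw [← h, hkfval] at hjk; exact lt_irrefl _ hjk
        by_cases hikf : i = kf
        · subst hikf
          rw [hM2kf j]
          exact hz1 j _ hjk hij
        · rw [hM2ne i j hikf, hz1 j i hjk hij, hz1 j kf hjk hkfj, mul_zero, sub_zero]
      · have hjkf : j = kf := by
          apply Fin.val_injective
          rw [hkfval]; omega
        subst hjkf
        rw [hM2ne i kf hij, mul_assoc, inv_mul_cancel₀ hp1, mul_one, sub_self]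
    have hdz2 : ∀ j : Fin n, (j : ℕ) < k + 1 → M2 j j ≠ 0 := by
      intro j hj
      by_cases hjk : (j : ℕ) < k
      · have hjkf : j ≠ kf := fun h => by
          rw [h, hkfval] at hjk; exact lt_irrefl _ hjk
        have hkfj : kf ≠ j := fun h => hjkf h.symm
        rw [hM2ne j j hjkf, hz1 j kf hjk hkfj, mul_zero, sub_zero]
        exact hdz1 j hjk
      · have hjkf : j = kf := by
          apply Fin.val_injective
          rw [hkfval]; omega
        subst hjkf
        rw [hM2kf kf]
        exact hp1
    obtain ⟨d, hd⟩ := ih (k + 1) M2 hu2 (by omega) hz2 hdz2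
    exact ⟨d, hre2.trans hd⟩

lemma reduce {M : Matrix (Fin n) (Fin n) F} (hM : IsUnit M) :
    ∃ d : Fin n → F, RowEquiv M (Matrix.diagonal d) :=
  reduce_aux n 0 M hM (by omega) (fun j i hj _ => absurd hj (by omega))
    (fun j hj => absurd hj (by omega))

lemma mul_updateColumn_one (A : Matrix (Fin n) (Fin n) F) (j : Fin n) (x : Fin n → F) :
    A * ((1 : Matrix (Fin n) (Fin n) F).updateCol j x) = A.updateCol j (A.mulVec x) := by
  ext i l
  rw [mul_apply, Matrix.updateCol_apply]
  by_cases hl : l = j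
  · subst hl
    rw [if_pos rfl, mulVec_def]
    exact Finset.sum_congr rfl fun k _ => by rw [Matrix.updateCol_apply, if_pos rfl]
  · rw [if_neg hl]
    have h1 : ∀ k, ((1 : Matrix (Fin n) (Fin n) F).updateCol j x) k l
        = (1 : Matrix (Fin n) (Fin n) F) k l := fun k => by
      rw [Matrix.updateCol_apply, if_neg hl]
    rw [Finset.sum_congr rfl fun k _ => by rw [h1 k]]
    simp [Matrix.one_apply, mul_ite, Finset.sum_ite_eq']

end DieudonneAux

open DieudonneAux Matrix in
set_option maxHeartbeats 1000000 in
theorem dieudonne_cramer {F : Type} [DivisionRing F] (n : ℕ)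
    (Det : Matrix (Fin n) (Fin n) F → WithZero (Abelianization Fˣ))
    (hsing : ∀ A, Det A = 0 ↔ ¬ IsUnit A)
    (hdiag : ∀ d : Fin n → F, Det (Matrix.diagonal d) = cls ((List.ofFn d).prod))
    (hrowadd : ∀ (A : Matrix (Fin n) (Fin n) F) (i j : Fin n), i ≠ j → ∀ l : F,
      Det (A.updateRow i (A i + l • A j)) = Det A)
    (hrowsmul : ∀ (A : Matrix (Fin n) (Fin n) F) (i : Fin n) (l : F),
      Det (A.updateRow i (l • A i)) = cls l * Det A)
    (A : Matrix (Fin n) (Fin n) F) (b : Fin n → F) :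
    ((∃! x : Fin n → F, A.mulVec x = b) ↔ Det A ≠ 0) ∧
    (Det A ≠ 0 → ∀ x : Fin n → F, A.mulVec x = b →
      ∀ j : Fin n, cls (x j) = (Det A)⁻¹ * Det (A.updateCol j b)) := by
  constructor
  · constructor
    · intro hex
      obtain ⟨x0, hx0, huniq⟩ := hex
      have hinj : Function.Injective A.mulVec := by
        intro x y hxy
        have h1 : A.mulVec (x0 + (x - y)) = b := by
          rw [Matrix.mulVec_add, Matrix.mulVec_sub, hxy, sub_self, add_zero, hx0]
        have h2 : x0 + (x - y) = x0 := huniq _ h1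
        have h3 : x - y = 0 := by
          have h4 := congrArg (fun v => v - x0) h2
          simpa [add_sub_cancel_left] using h4
        exact sub_eq_zero.mp h3
      exact fun h0 => (hsing A).1 h0 (isUnit_of_mulVec_injective hinj)
    · intro hdet
      have hA : IsUnit A := by
        by_contra h
        exact hdet ((hsing A).2 h)
      obtain ⟨u, hu⟩ := hA
      refine ⟨(Units.val u⁻¹).mulVec b, ?_, ?_⟩
      · show A.mulVec _ = b
        rw [Matrix.mulVec_mulVec, ← hu, Units.mul_inv, Matrix.one_mulVec]
      · intro y hy
        have hy' : A.mulVec y = b := hy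
        calc y = (1 : Matrix (Fin n) (Fin n) F).mulVec y := (Matrix.one_mulVec y).symm
        _ = ((Units.val u⁻¹) * A).mulVec y := by rw [← hu, Units.inv_mul]
        _ = (Units.val u⁻¹).mulVec (A.mulVec y) :=
            (Matrix.mulVec_mulVec _ _ _).symm
        _ = (Units.val u⁻¹).mulVec b := by rw [hy']
  · intro hdet x hx j
    have hA : IsUnit A := by
      by_contra h
      exact hdet ((hsing A).2 h)
    obtain ⟨d, hre⟩ := reduce hA
    have hDetA : Det A = cls ((List.ofFn d).prod) := by
      rw [← hre.det_eq Det hrowadd, hdiag]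
    have hdnz : ∀ i, d i ≠ 0 := by
      intro i hdi
      apply hdet
      rw [hDetA]
      have hmem : (0 : F) ∈ List.ofFn d := by
        rw [List.mem_ofFn]; exact ⟨i, hdi⟩
      rw [List.prod_eq_zero hmem, cls_zero]
    set C : Matrix (Fin n) (Fin n) F := (1 : Matrix (Fin n) (Fin n) F).updateCol j x
      with hCdef
    have hBC : A.updateCol j b = A * C := by
      rw [hCdef, mul_updateColumn_one, hx]
    by_cases hxj : x j = 0
    · have hnu : ¬ IsUnit (A.updateCol j b) := by
        intro hUB
        have hC : IsUnit C := by
          obtain ⟨ua, hua⟩ := hA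
          have hCeq : C = (Units.val ua⁻¹) * (A.updateCol j b) := by
            rw [hBC, ← hua, ← mul_assoc, Units.inv_mul, one_mul]
          rw [hCeq]
          exact (Units.isUnit ua⁻¹).mul hUB
        obtain ⟨uc, huc⟩ := hC
        have h11 : (C * Units.val uc⁻¹) j j = (1 : Matrix (Fin n) (Fin n) F) j j := by
          rw [← huc, Units.mul_inv]
        have hCrow : ∀ k, C j k = 0 := by
          intro k
          by_cases hk : k = j
          · subst hk
            rw [hCdef, Matrix.updateCol_apply, if_pos rfl, hxj]
          · rw [hCdef, Matrix.updateCol_apply, if_neg hk,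
              Matrix.one_apply_ne (fun h => hk h.symm)]
        rw [mul_apply, Matrix.one_apply_eq,
          Finset.sum_eq_zero (fun k _ => by rw [hCrow k, zero_mul])] at h11
        exact one_ne_zero h11.symm
      rw [hxj, cls_zero, (hsing _).2 hnu, mul_zero]
    · set d' : Fin n → F := Function.update d j (d j * x j) with hd'
      set M0 : Matrix (Fin n) (Fin n) F :=
        (Matrix.diagonal d).updateCol j (fun i => d i * x i) with hM0
      have hM0app : ∀ i l, M0 i l = if l = j then d i * x i else Matrix.diagonal d i l :=
        fun i l => by rw [hM0, Matrix.updateCol_apply]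
      have hM0jj : M0 j j = d j * x j := by rw [hM0app, if_pos rfl]
      have hp : M0 j j ≠ 0 := by
        rw [hM0jj]; exact mul_ne_zero (hdnz j) hxj
      have hdv : Matrix.diagonal d *ᵥ x = fun i => d i * x i :=
        funext fun i => Matrix.mulVec_diagonal d x i
      have e1 : Matrix.diagonal d * C = M0 := by
        rw [hCdef, mul_updateColumn_one, hM0, hdv]
      have e2 := clearCol M0 j hp (Finset.univ.erase j) (Finset.notMem_erase j _)
      have hdiagform : (fun i l => if i ∈ Finset.univ.erase j then
          M0 i l - M0 i j * (M0 j j)⁻¹ * M0 j l else M0 i l) = Matrix.diagonal d' := by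
        funext i l
        by_cases hij : i = j
        · subst hij
          rw [if_neg (Finset.notMem_erase i _), hM0app]
          by_cases hl : l = i
          · subst hl
            rw [if_pos rfl, Matrix.diagonal_apply_eq, hd', Function.update_self]
          · rw [if_neg hl]
            rw [Matrix.diagonal_apply_ne d (fun h => hl h.symm),
              Matrix.diagonal_apply_ne d' (fun h => hl h.symm)]
        · rw [if_pos (Finset.mem_erase.mpr ⟨hij, Finset.mem_univ i⟩)]
          by_cases hl : l = j
          · subst hl
            rw [mul_assoc, inv_mul_cancel₀ hp, mul_one, sub_self,
              Matrix.diagonal_apply_ne d' hij]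
          · have hj0 : M0 j l = 0 := by
              rw [hM0app, if_neg hl, Matrix.diagonal_apply_ne d (fun h => hl h.symm)]
            rw [hj0, mul_zero, sub_zero, hM0app, if_neg hl]
            by_cases hil : i = l
            · subst hil
              rw [Matrix.diagonal_apply_eq, Matrix.diagonal_apply_eq, hd',
                Function.update_of_ne hij]
            · rw [Matrix.diagonal_apply_ne d hil, Matrix.diagonal_apply_ne d' hil]
      have e3 : RowEquiv (A * C) (Matrix.diagonal d') := by
        have e0 : RowEquiv (A * C) (Matrix.diagonal d * C) := hre.mul_right C
        rw [e1] at e0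
        rw [hdiagform] at e2
        exact e0.trans e2
      have hDetB : Det (A.updateCol j b) = cls ((List.ofFn d').prod) := by
        rw [hBC, ← e3.det_eq Det hrowadd, hdiag]
      rw [hDetB, hDetA, cls_list_prod, cls_list_prod]
      have hupdate : ∀ i, cls (d' i)
          = Function.update (fun i => cls (d i)) j (cls (d j) * cls (x j)) i := by
        intro i
        by_cases h : i = j
        · subst h
          rw [hd', Function.update_self, Function.update_self, cls_mul]
        · rw [hd', Function.update_of_ne h, Function.update_of_ne h]
      rw [Finset.prod_congr rfl fun i _ => hupdate i,
        Finset.prod_update_of_mem (Finset.mem_univ j)]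
      have hsd : (Finset.univ \ {j} : Finset (Fin n)) = Finset.univ.erase j := by
        ext a
        simp [Finset.mem_erase, Finset.mem_sdiff, and_comm]
      rw [hsd, ← Finset.mul_prod_erase Finset.univ (fun i => cls (d i)) (Finset.mem_univ j)]
      have ht : (∏ i ∈ Finset.univ.erase j, cls (d i)) ≠ 0 :=
        Finset.prod_ne_zero_iff.mpr fun i _ => cls_ne_zero (hdnz i)
      have hne : cls (d j) * (∏ i ∈ Finset.univ.erase j, cls (d i)) ≠ 0 :=
        mul_ne_zero (cls_ne_zero (hdnz j)) ht
      rw [mul_right_comm (cls (d j)) (cls (x j)), inv_mul_cancel_left₀ hne]
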